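/- Let T be an index set, (B_t)_{t∈T} Banach spaces, B = Π_{t∈T} B_t, and X ⊆ B a subspace. If S ⊆ T is such that there exists a continuous linear projection r : B → B with range X fixing X pointwise, and S is r-admissible, then for all r-admissible R with S ⊆ R ⊆ T the restriction map π^R_S maps π_R(X) onto π_S(X), and this restriction π^R_S|_{π_R(X)} : π_R(X) → π_S(X) is a continuous open surjection admitting a continuous linear section y ↦ r_R(i^R_S(y)), where r_R = π_R ∘ r ∘ i_R. -/

import Mathlib

/-- The restriction map `x ↦ x|_S` from the full product to the subproduct over `S`. -/
def restr {T : Type*} {B : T → Type*} (S : Set T) (x : ∀ t, B t) : ∀ t : S, B (t : T) :=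
  fun t => x t

/-- The restriction map `π^R_S` between subproducts, for `S ⊆ R`, as a plain function. -/
def restrFrom {T : Type*} {B : T → Type*} (S R : Set T) (hSR : S ⊆ R)
    (x : ∀ t : R, B (t : T)) : ∀ t : S, B (t : T) :=
  fun s => x ⟨(s : T), hSR s.2⟩

/-- `S ⊆ T` is `r`-admissible (with respect to the subspace `X`) if
`π_S (r z) = π_S z` whenever `π_S z ∈ π_S(X)`. -/
def RAdmissible {T : Type*} {B : T → Type*} (X : Set (∀ t, B t))
    (r : (∀ t, B t) → (∀ t, B t)) (S : Set T) : Prop :=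
  ∀ z : ∀ t, B t, restr S z ∈ restr (B := B) S '' X → restr (B := B) S (r z) = restr S z

/-- The restriction map `π_S` as a continuous linear map. -/
def restrL {T : Type*} (B : T → Type*)
    [∀ t, NormedAddCommGroup (B t)] [∀ t, NormedSpace ℝ (B t)] (S : Set T) :
    (∀ t, B t) →L[ℝ] (∀ t : S, B (t : T)) :=
  ContinuousLinearMap.pi fun s : S => ContinuousLinearMap.proj (R := ℝ) (s : T)

open Classical in
/-- The section `i_S` of `π_S`, extending by zero outside `S`. -/
noncomputable def extendZ {T : Type*} {B : T → Type*} [∀ t, Zero (B t)] (S : Set T)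
    (y : ∀ t : S, B (t : T)) : ∀ t, B t :=
  fun t => if h : t ∈ S then y ⟨t, h⟩ else 0

open Classical in
/-- The section `i^R_S` of `π^R_S`, extending by zero on `R \ S`. -/
noncomputable def extendZ2 {T : Type*} {B : T → Type*} [∀ t, Zero (B t)] (S R : Set T)
    (y : ∀ t : S, B (t : T)) : ∀ t : R, B (t : T) :=
  fun t => if h : (t : T) ∈ S then y ⟨t, h⟩ else 0

theorem aux_isOpenMap_of_rightInverse {E F : Type*} [TopologicalSpace E] [TopologicalSpace F]
    [AddCommGroup E] [IsTopologicalAddGroup E] [AddCommGroup F]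
    (p : E →+ F) (hp : Continuous p) (s : F → E) (hs : Continuous s)
    (hps : ∀ y, p (s y) = y) : IsOpenMap p := by
  intro U hU
  have himg : p '' U = s ⁻¹' (⋃ k ∈ (p ⁻¹' {0} : Set E), (k + ·) '' U) := by
    ext y
    simp only [Set.mem_preimage, Set.mem_iUnion, Set.mem_image, Set.mem_singleton_iff,
      exists_prop]
    constructor
    · rintro ⟨u, hu, rfl⟩
      refine ⟨s (p u) - u, ?_, u, hu, by abel⟩
      simp [map_sub, hps]
    · rintro ⟨k, hk, u, hu, hku⟩
      refine ⟨u, hu, ?_⟩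
      have := congrArg p hku
      rw [map_add, hk, zero_add, hps] at this
      exact this
  rw [himg]
  refine ((isOpen_biUnion fun k _ => ?_)).preimage hs
  exact (Homeomorph.addLeft k).isOpenMap U hU

theorem restriction_between_admissible_images_is_open_split_surjection
    {T : Type*} (B : T → Type*)
    [∀ t, NormedAddCommGroup (B t)] [∀ t, NormedSpace ℝ (B t)] [∀ t, CompleteSpace (B t)]
    (X : Submodule ℝ (∀ t, B t)) (r : (∀ t, B t) →L[ℝ] (∀ t, B t))
    (hrange : Set.range r = (X : Set (∀ t, B t))) (hfix : ∀ x ∈ X, r x = x)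
    (S R : Set T) (hSR : S ⊆ R)
    (hS : RAdmissible (X : Set (∀ t, B t)) r S) (hR : RAdmissible (X : Set (∀ t, B t)) r R) :
    restrFrom S R hSR '' ((Submodule.map (restrL B R).toLinearMap X : Set (∀ t : R, B (t : T))))
        = (Submodule.map (restrL B S).toLinearMap X : Set (∀ t : S, B (t : T))) ∧
    ∃ hm : Set.MapsTo (restrFrom S R hSR)
        (Submodule.map (restrL B R).toLinearMap X : Set (∀ t : R, B (t : T)))
        (Submodule.map (restrL B S).toLinearMap X : Set (∀ t : S, B (t : T))),
      Continuous hm.restrict ∧ IsOpenMap hm.restrict ∧ Function.Surjective hm.restrict ∧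
      ∃ σ : (Submodule.map (restrL B S).toLinearMap X) →L[ℝ]
          (Submodule.map (restrL B R).toLinearMap X),
        (∀ y : Submodule.map (restrL B S).toLinearMap X,
          (σ y : ∀ t : R, B (t : T)) =
            restr R (r (extendZ R (extendZ2 S R (y : ∀ t : S, B (t : T)))))) ∧
        (∀ y : Submodule.map (restrL B S).toLinearMap X,
          restrFrom S R hSR (σ y : ∀ t : R, B (t : T)) = (y : ∀ t : S, B (t : T))) := by
  classical
  set PR := Submodule.map (restrL B R).toLinearMap X with hPR
  set PS := Submodule.map (restrL B S).toLinearMap X with hPS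
  -- basic facts
  have hrestrL : ∀ (A : Set T) (x : ∀ t, B t), restrL B A x = restr A x := fun A x => rfl
  have hfactor : ∀ x : ∀ t, B t, restrFrom S R hSR (restr R x) = restr S x := fun x => rfl
  -- image equality
  have himg : restrFrom S R hSR '' (PR : Set (∀ t : R, B (t : T))) = (PS : Set (∀ t : S, B (t : T))) := by
    ext y
    constructor
    · rintro ⟨w, hw, rfl⟩
      rcases hw with ⟨x, hx, rfl⟩
      exact ⟨x, hx, rfl⟩
    · rintro ⟨x, hx, rfl⟩
      exact ⟨restrL B R x, ⟨x, hx, rfl⟩, rfl⟩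
  have hm : Set.MapsTo (restrFrom S R hSR) (PR : Set (∀ t : R, B (t : T)))
      (PS : Set (∀ t : S, B (t : T))) := fun a ha => himg ▸ Set.mem_image_of_mem _ ha
  -- extension by zero as a CLM
  let e : (∀ s : S, B (s : T)) →L[ℝ] (∀ t, B t) :=
    ContinuousLinearMap.pi fun t =>
      if h : t ∈ S then ContinuousLinearMap.proj (R := ℝ) (⟨t, h⟩ : S) else 0
  have he : ∀ y, e y = extendZ S y := by
    intro y
    funext t
    simp only [e, ContinuousLinearMap.pi_apply, extendZ]
    split
    · rfl
    · rfl
  have hext : ∀ y : ∀ s : S, B (s : T),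
      extendZ R (extendZ2 S R y) = extendZ S y := by
    intro y
    funext t
    simp only [extendZ, extendZ2]
    by_cases hR' : t ∈ R
    · simp [hR']
    · have hS' : t ∉ S := fun h => hR' (hSR h)
      simp [hR', hS']
  have heS : ∀ y, restr S (e y) = y := by
    intro y
    funext s
    simp [restr, he y, extendZ, s.2]
  -- the section as a CLM
  let σ0 : (∀ s : S, B (s : T)) →L[ℝ] (∀ t : R, B (t : T)) :=
    (restrL B R).comp (r.comp e)
  have hσ0mem : ∀ y : PS, σ0 (y : ∀ s : S, B (s : T)) ∈ PR := by
    intro y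
    have : r (e (y : ∀ s : S, B (s : T))) ∈ X := by
      have : r (e (y : ∀ s : S, B (s : T))) ∈ Set.range r := ⟨_, rfl⟩
      rwa [hrange] at this
    exact ⟨_, this, rfl⟩
  let σ : PS →L[ℝ] PR :=
    ContinuousLinearMap.codRestrict (σ0.comp PS.subtypeL) PR hσ0mem
  have hσval : ∀ y : PS, (σ y : ∀ t : R, B (t : T)) =
      restr R (r (extendZ R (extendZ2 S R (y : ∀ t : S, B (t : T))))) := by
    intro y
    show σ0 (y : ∀ s : S, B (s : T)) = _
    rw [hext, ← he]
    rfl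
  have hsec : ∀ y : PS, restrFrom S R hSR (σ y : ∀ t : R, B (t : T)) = (y : ∀ t : S, B (t : T)) := by
    intro y
    have h1 : restrFrom S R hSR (σ y : ∀ t : R, B (t : T))
        = restr S (r (e (y : ∀ t : S, B (t : T)))) := rfl
    rw [h1]
    have hmemS : restr S (e (y : ∀ t : S, B (t : T))) ∈ restr (B := B) S '' (X : Set (∀ t, B t)) := by
      rw [heS]
      rcases y.2 with ⟨x, hx, hxy⟩
      exact ⟨x, hx, hxy⟩
    rw [hS _ hmemS, heS]
  -- the restricted map as an additive hom
  let q : (∀ t : R, B (t : T)) →L[ℝ] (∀ s : S, B (s : T)) :=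
    ContinuousLinearMap.pi fun s : S => ContinuousLinearMap.proj (R := ℝ) (⟨(s : T), hSR s.2⟩ : R)
  have hq : ∀ x, q x = restrFrom S R hSR x := fun x => rfl
  have hqmem : ∀ x : PR, q (x : ∀ t : R, B (t : T)) ∈ PS := by
    intro x
    have := hm x.2
    rwa [← hq] at this
  let p : PR →L[ℝ] PS := ContinuousLinearMap.codRestrict (q.comp PR.subtypeL) PS hqmem
  have hpeq : hm.restrict = ⇑p := by
    funext x
    exact Subtype.ext rfl
  have hps : ∀ y : PS, p (σ y) = y := by
    intro y
    apply Subtype.ext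
    show q (σ y : ∀ t : R, B (t : T)) = (y : ∀ t : S, B (t : T))
    rw [hq]
    exact hsec y
  refine ⟨himg, hm, ?_, ?_, ?_, σ, hσval, hsec⟩
  · rw [hpeq]; exact p.continuous
  · rw [hpeq]
    exact aux_isOpenMap_of_rightInverse (p : PR →+ PS) p.continuous σ σ.continuous hps
  · intro y
    exact ⟨σ y, by rw [hpeq]; exact hps y⟩
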